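/- arXiv:2406.18912 — 3 statements merged into one kernel-verified Lean document; each statement's English description precedes it below -/
import Mathlib

section
/- For any natural numbers k, n, m, there exists a number R such that for any linearly ordered set X with |X| ≥ R and any function f : Xⁿ → Fin k, there is a subset Y ⊆ X with |Y| ≥ m such that f is constant on each equivalence class of Yⁿ under the order-type equivalence relation ∼. -/
set_option autoImplicit false
set_option maxHeartbeats 1000000

open Finset

/-- Order-type equivalence of tuples: `x ∼ y` iff corresponding entries compare the
same way (both `<` and `=` patterns agree). -/
def OrderTypeEquiv {X : Type} [LinearOrder X] {n : ℕ} (x y : Fin n → X) : Prop :=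
  ∀ i j : Fin n, i < j → ((x i < x j ↔ y i < y j) ∧ (x i = x j ↔ y i = y j))

section Helpers
variable {X : Type} [LinearOrder X] {n : ℕ}

lemma otev_eq {u v : Fin n → X} (h : OrderTypeEquiv u v) (i j : Fin n) :
    u i = u j ↔ v i = v j := by
  rcases lt_trichotomy i j with hij | hij | hij
  · exact (h i j hij).2
  · subst hij; simp
  · rw [eq_comm, eq_comm (a := v i)]; exact (h j i hij).2

lemma otev_lt {u v : Fin n → X} (h : OrderTypeEquiv u v) (i j : Fin n) :
    u i < u j ↔ v i < v j := by
  rcases lt_trichotomy i j with hij | hij | hij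
  · exact (h i j hij).1
  · subst hij; simp
  · rw [lt_iff_not_ge, lt_iff_not_ge, le_iff_lt_or_eq,
      le_iff_lt_or_eq, (h j i hij).1, otev_eq h j i]

lemma strictMono_cons {a : X} {x : Fin n → X} (hx : StrictMono x) (h : ∀ i, a < x i) :
    StrictMono (Fin.cons a x) := by
  intro i j hij
  induction i using Fin.cases with
  | zero =>
    induction j using Fin.cases with
    | zero => exact absurd hij (lt_irrefl _)
    | succ j' => simpa using h j'
  | succ i' =>
    induction j using Fin.cases with
    | zero => exact absurd hij (by simp)
    | succ j' => simpa using hx (Fin.succ_lt_succ_iff.mp hij)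

/-- the index of an element in the sorted enumeration equals the number of
smaller elements of the finset. -/
lemma orderEmbOfFin_index {s : Finset X} {r : ℕ} (h : s.card = r) {a : X} (ha : a ∈ s)
    (hlt : (s.filter (· < a)).card < r) :
    s.orderEmbOfFin h ⟨(s.filter (· < a)).card, hlt⟩ = a := by
  have hrange := Finset.range_orderEmbOfFin s h
  have : a ∈ Set.range (s.orderEmbOfFin h) := by rw [hrange]; exact ha
  obtain ⟨j, hj⟩ := this
  have key : s.filter (· < a) = Finset.image (s.orderEmbOfFin h) (Finset.Iio j) := by
    ext b
    simp only [mem_filter, Finset.mem_image, Finset.mem_Iio]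
    constructor
    · rintro ⟨hb, hba⟩
      have hb' : b ∈ Set.range (s.orderEmbOfFin h) := by rw [hrange]; exact hb
      obtain ⟨i, rfl⟩ := hb'
      exact ⟨i, (s.orderEmbOfFin h).lt_iff_lt.1 (hj ▸ hba), rfl⟩
    · rintro ⟨i, hij, rfl⟩
      exact ⟨Finset.orderEmbOfFin_mem s h i, hj ▸ ((s.orderEmbOfFin h).lt_iff_lt.2 hij)⟩
  have hcard : (s.filter (· < a)).card = (j : ℕ) := by
    rw [key, Finset.card_image_of_injective _ (s.orderEmbOfFin h).injective, Fin.card_Iio]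
  have hidx : (⟨(s.filter (· < a)).card, hlt⟩ : Fin r) = j := Fin.ext hcard
  rw [hidx, hj]

end Helpers

section Rank
variable {X : Type} [LinearOrder X] {n : ℕ}

/-- the number of distinct values of `u` that are smaller than `u i`,
counted via minimal representative indices. -/
def rnk (u : Fin n → X) (i : Fin n) : ℕ :=
  (univ.filter (fun j => u j < u i ∧ ∀ j', u j' = u j → j ≤ j')).card

lemma rnk_lt (u : Fin n → X) (i : Fin n) : rnk u i < n := by
  have hi : i ∉ univ.filter (fun j => u j < u i ∧ ∀ j', u j' = u j → j ≤ j') := by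
    simp
  have hss : univ.filter (fun j => u j < u i ∧ ∀ j', u j' = u j → j ≤ j') ⊂ univ :=
    Finset.ssubset_univ_iff.mpr (fun h => hi (by rw [h]; exact Finset.mem_univ i))
  simpa [rnk] using Finset.card_lt_card hss

lemma rnk_congr {u v : Fin n → X} (h : OrderTypeEquiv u v) (i : Fin n) :
    rnk u i = rnk v i := by
  unfold rnk
  congr 1
  apply Finset.filter_congr
  intro j _
  exact and_congr (otev_lt h j i)
    (forall_congr' fun j' => imp_congr (otev_eq h j' j) Iff.rfl)

lemma rnk_eq_card_filter (u : Fin n → X) (i : Fin n) :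
    rnk u i = ((univ.image u).filter (· < u i)).card := by
  refine Finset.card_bij (fun j _ => u j) ?_ ?_ ?_
  · intro j hj
    simp only [Finset.mem_filter, Finset.mem_univ, true_and] at hj ⊢
    exact ⟨Finset.mem_image_of_mem u (Finset.mem_univ j), hj.1⟩
  · intro j1 hj1 j2 hj2 hval
    simp only [Finset.mem_filter, Finset.mem_univ, true_and] at hj1 hj2
    exact le_antisymm (hj1.2 j2 hval.symm) (hj2.2 j1 hval)
  · intro b hb
    simp only [Finset.mem_filter, Finset.mem_image, Finset.mem_univ, true_and] at hb
    obtain ⟨⟨j0, hj0⟩, hblt⟩ := hb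
    have hne : (univ.filter (fun j => u j = b)).Nonempty :=
      ⟨j0, by simp [hj0]⟩
    set j := (univ.filter (fun j => u j = b)).min' hne with hjdef
    have hjb : u j = b := by
      have := (univ.filter (fun j => u j = b)).min'_mem hne
      simpa using this
    refine ⟨j, ?_, hjb⟩
    simp only [Finset.mem_filter, Finset.mem_univ, true_and]
    refine ⟨hjb ▸ hblt, fun j' hj' => ?_⟩
    apply Finset.min'_le
    simp [hj', hjb]

lemma rnk_lt_card_image (u : Fin n → X) (i : Fin n) :
    rnk u i < (univ.image u).card := by
  rw [rnk_eq_card_filter]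
  refine Finset.card_lt_card ⟨Finset.filter_subset _ _, fun hsub => ?_⟩
  have := hsub (Finset.mem_image_of_mem u (Finset.mem_univ i))
  simp at this

end Rank

/-- Any tuple with values among the first `N - n` elements of `t` can be written as
a strictly monotone tuple into `t` composed with its rank pattern. -/
lemma keyB {X : Type} [LinearOrder X] {n N : ℕ} (t : Finset X) (hN : t.card = N)
    (hn : n ≤ N) (u : Fin n → X)
    (hu : ∀ i, ∃ k : Fin N, (k : ℕ) < N - n ∧ t.orderEmbOfFin hN k = u i) :
    ∃ x : Fin n → X, StrictMono x ∧ (∀ j, x j ∈ t) ∧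
      ∀ i (hlt : rnk u i < n), x ⟨rnk u i, hlt⟩ = u i := by
  classical
  set w := t.orderEmbOfFin hN with hw
  set su : Finset X := univ.image u with hsu
  set r : ℕ := su.card with hrdef
  have hr : r ≤ n := by
    calc r ≤ (univ : Finset (Fin n)).card := Finset.card_image_le
    _ = n := by simp
  set enum := su.orderEmbOfFin (rfl : su.card = r) with henum
  -- every element of `su` is below every padding element
  have hsmall : ∀ b ∈ su, ∀ k : Fin N, N - n ≤ (k : ℕ) → b < w k := by
    intro b hb k hk
    obtain ⟨i, _, rfl⟩ := Finset.mem_image.1 hb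
    obtain ⟨k', hk', hk'e⟩ := hu i
    rw [← hk'e]
    exact w.strictMono (by omega : k' < k)
  have hsu_sub : ∀ b ∈ su, b ∈ t := by
    intro b hb
    obtain ⟨i, _, rfl⟩ := Finset.mem_image.1 hb
    obtain ⟨k', _, hk'e⟩ := hu i
    rw [← hk'e]
    exact Finset.orderEmbOfFin_mem t hN k'
  have hpadlt : ∀ j : Fin n, N - n + (j : ℕ) < N := fun j => by omega
  set x : Fin n → X := fun j =>
    if h : (j : ℕ) < r then enum ⟨j, h⟩ else w ⟨N - n + (j : ℕ), hpadlt j⟩ with hx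
  have henum_mem : ∀ p : Fin r, enum p ∈ su := fun p => Finset.orderEmbOfFin_mem su rfl p
  refine ⟨x, ?_, ?_, ?_⟩
  · intro j1 j2 h12
    have h12' : (j1 : ℕ) < (j2 : ℕ) := h12
    by_cases h1 : (j1 : ℕ) < r <;> by_cases h2 : (j2 : ℕ) < r
    · simp only [hx, dif_pos h1, dif_pos h2]
      exact enum.strictMono (by exact h12' : (⟨j1, h1⟩ : Fin r) < ⟨j2, h2⟩)
    · simp only [hx, dif_pos h1, dif_neg h2]
      exact hsmall _ (henum_mem _) _ (by simp only [Fin.val_mk]; omega)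
    · omega
    · simp only [hx, dif_neg h1, dif_neg h2]
      exact w.strictMono (by exact (by omega : N - n + (j1:ℕ) < N - n + (j2:ℕ)))
  · intro j
    by_cases h1 : (j : ℕ) < r
    · simp only [hx, dif_pos h1]
      exact hsu_sub _ (henum_mem _)
    · simp only [hx, dif_neg h1]
      exact Finset.orderEmbOfFin_mem t hN _
  · intro i hlt
    have hri : rnk u i < r := rnk_lt_card_image u i
    have hcard : rnk u i = (su.filter (· < u i)).card := rnk_eq_card_filter u i
    have hflt : (su.filter (· < u i)).card < r := hcard ▸ hri
    have hui : u i ∈ su := Finset.mem_image_of_mem u (Finset.mem_univ i)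
    have := orderEmbOfFin_index (rfl : su.card = r) hui hflt
    simp only [hx, dif_pos hri]
    rw [← this]
    congr 1
    exact Fin.ext hcard

def Homog {X : Type} [LinearOrder X] {n : ℕ} {κ : Type} (t : Finset X)
    (g : (Fin n → X) → κ) : Prop :=
  ∀ x y : Fin n → X, StrictMono x → StrictMono y →
    (∀ i, x i ∈ t) → (∀ i, y i ∈ t) → g x = g y

theorem stepA (n : ℕ) : ∀ (κ : Type) [Fintype κ] [Nonempty κ] (m : ℕ), ∃ R : ℕ,
    ∀ (X : Type) (_inst : LinearOrder X) (s : Finset X), R ≤ s.card →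
      ∀ g : (Fin n → X) → κ, ∃ t, t ⊆ s ∧ m ≤ t.card ∧ Homog t g := by
  induction n with
  | zero =>
    intro κ _ _ m
    exact ⟨m, fun X _ s hs g => ⟨s, subset_rfl, hs, fun x y _ _ _ _ =>
      congrArg g (funext fun i => i.elim0)⟩⟩
  | succ n ih =>
    intro κ instF instN m
    classical
    have key : ∀ M : ℕ, ∃ R : ℕ, ∀ (X : Type) (_inst : LinearOrder X) (s : Finset X),
        R ≤ s.card → ∀ g : (Fin (n+1) → X) → κ,
        ∃ (t : Finset X) (c : X → κ), t ⊆ s ∧ t.card = M ∧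
          ∀ x : Fin (n+1) → X, StrictMono x → (∀ i, x i ∈ t) → g x = c (x 0) := by
      intro M
      induction M with
      | zero =>
        exact ⟨0, fun X _ s _ g => ⟨∅, fun _ => Classical.arbitrary κ, Finset.empty_subset s,
          Finset.card_empty, fun x _ hmem => absurd (hmem 0) (Finset.notMem_empty _)⟩⟩
      | succ M ihM =>
        obtain ⟨RM, hRM⟩ := ihM
        obtain ⟨Rn, hRn⟩ := ih κ (max RM n)
        refine ⟨Rn + 1, ?_⟩
        intro X _inst s hs g
        have hsne : s.Nonempty := Finset.card_pos.mp (by omega)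
        set a := s.min' hsne with hadef
        have ha : a ∈ s := s.min'_mem hsne
        have hs0card : Rn ≤ (s.erase a).card := by
          rw [Finset.card_erase_of_mem ha]; omega
        obtain ⟨ta, hta_sub, hta_card, hta_hom⟩ :=
          hRn X _inst (s.erase a) hs0card (fun x => g (Fin.cons a x))
        have htan : n ≤ ta.card := le_trans (le_max_right _ _) hta_card
        set z : Fin n → X := fun i => ta.orderEmbOfCardLe htan i with hzdef
        have hzmono : StrictMono z := (ta.orderEmbOfCardLe htan).strictMono
        have hzmem : ∀ i, z i ∈ ta := fun i => ta.orderEmbOfCardLe_mem htan i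
        set ca : κ := g (Fin.cons a z) with hcadef
        obtain ⟨t', c', ht'sub, ht'card, ht'hom⟩ :=
          hRM X _inst ta (le_trans (le_max_left _ _) hta_card) g
        have halt : ∀ b ∈ ta, a < b := by
          intro b hb
          have hb' := hta_sub hb
          rw [Finset.mem_erase] at hb'
          exact lt_of_le_of_ne (s.min'_le b hb'.2) hb'.1.symm
        have hat' : a ∉ t' := fun h => lt_irrefl a (halt a (ht'sub h))
        refine ⟨insert a t', fun b => if b = a then ca else c' b, ?_, ?_, ?_⟩
        · exact Finset.insert_subset ha
            (ht'sub.trans (hta_sub.trans (Finset.erase_subset a s)))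
        · rw [Finset.card_insert_of_notMem hat', ht'card]
        · intro x hxmono hxmem
          by_cases hx0 : x 0 = a
          · have htailmono : StrictMono (Fin.tail x) :=
              fun i j h => hxmono (Fin.succ_lt_succ_iff.mpr h)
            have htailmem : ∀ i, Fin.tail x i ∈ t' := by
              intro i
              have hgt : a < x i.succ := by
                rw [← hx0]
                exact hxmono (Fin.succ_pos i)
              have := hxmem i.succ
              rw [Finset.mem_insert] at this
              exact this.resolve_left (fun h => absurd (h ▸ hgt) (lt_irrefl a))
            have hxeq : x = Fin.cons a (Fin.tail x) := by
              rw [← hx0]; exact (Fin.cons_self_tail x).symm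
            have h1 : g x = ca := by
              rw [hxeq]
              exact hta_hom (Fin.tail x) z htailmono hzmono
                (fun i => ht'sub (htailmem i)) hzmem
            rw [h1, hx0]; simp
          · have hx0t : x 0 ∈ t' := (Finset.mem_insert.mp (hxmem 0)).resolve_left hx0
            have hall : ∀ i, x i ∈ t' := by
              intro i
              rcases eq_or_ne i 0 with rfl | hi
              · exact hx0t
              · have hgt : x 0 < x i := hxmono (Fin.pos_iff_ne_zero.mpr hi)
                have halx : a < x 0 := halt _ (ht'sub hx0t)
                have := hxmem i
                rw [Finset.mem_insert] at this
                refine this.resolve_left (fun h => ?_)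
                rw [h] at hgt
                exact absurd (halx.trans hgt) (lt_irrefl a)
            rw [ht'hom x hxmono hall]; simp [hx0]
    obtain ⟨R, hkey⟩ := key (Fintype.card κ * m + 1)
    refine ⟨R, ?_⟩
    intro X _inst s hs g
    obtain ⟨t, c, hsub, hcard, hhom⟩ := hkey X _inst s hs g
    have hpig : ∃ c₀ ∈ (Finset.univ : Finset κ), m < (t.filter (fun b => c b = c₀)).card := by
      apply Finset.exists_lt_card_fiber_of_mul_lt_card_of_maps_to
      · intro b _; exact Finset.mem_univ _
      · rw [hcard, Finset.card_univ]; omega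
    obtain ⟨c₀, _, hc₀⟩ := hpig
    refine ⟨t.filter (fun b => c b = c₀), (Finset.filter_subset _ _).trans hsub,
      le_of_lt hc₀, ?_⟩
    intro x y hx hy hxm hym
    have hxc : c (x 0) = c₀ := (Finset.mem_filter.mp (hxm 0)).2
    have hyc : c (y 0) = c₀ := (Finset.mem_filter.mp (hym 0)).2
    rw [hhom x hx (fun i => Finset.filter_subset _ _ (hxm i)),
      hhom y hy (fun i => Finset.filter_subset _ _ (hym i)), hxc, hyc]

/-- Ordered Ramsey theorem for tuples: for all `k n m` there is `R` such that any
linearly ordered set `X` of cardinality at least `R` and any `f : Xⁿ → Fin k`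
admit a subset `Y` of cardinality at least `m` on which `f` is constant on each
`∼`-equivalence class of `Yⁿ`. -/
theorem ordered_ramsey_tuples (k n m : ℕ) :
    ∃ R : ℕ, ∀ (X : Type) (_ : LinearOrder X), (R : Cardinal) ≤ Cardinal.mk X →
      ∀ f : (Fin n → X) → Fin k,
        ∃ Y : Set X, (m : Cardinal) ≤ Cardinal.mk Y ∧
          ∀ x y : Fin n → X, (∀ i, x i ∈ Y) → (∀ i, y i ∈ Y) →
            OrderTypeEquiv x y → f x = f y := by
  classical
  rcases Nat.eq_zero_or_pos k with rfl | hk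
  · refine ⟨1, ?_⟩
    intro X inst hX f
    letI := inst
    have hne : Nonempty X := by
      rw [← Cardinal.mk_ne_zero_iff]
      intro h
      rw [h] at hX
      simpa using hX
    obtain ⟨x₀⟩ := hne
    exact ((f fun _ => x₀).elim0)
  · haveI : Nonempty (Fin k) := ⟨⟨0, hk⟩⟩
    obtain ⟨R₀, hR₀⟩ := stepA n ((Fin n → Fin n) → Fin k) (m + n)
    refine ⟨R₀, ?_⟩
    intro X inst hX f
    letI := inst
    -- extract a finset of size R₀
    have hemb : Nonempty (Fin R₀ ↪ X) := by
      rw [← Cardinal.mk_fin R₀, Cardinal.le_def] at hX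
      exact hX
    obtain ⟨e⟩ := hemb
    set s : Finset X := Finset.univ.map e with hsdef
    have hscard : R₀ ≤ s.card := by simp [hsdef]
    set g : (Fin n → X) → ((Fin n → Fin n) → Fin k) := fun x p => f (x ∘ p) with hg
    obtain ⟨t, hts, htcard, hthom⟩ := hR₀ X inst s hscard g
    set N := t.card with hNdef
    have hn : n ≤ N := by omega
    set w := t.orderEmbOfFin (rfl : t.card = N) with hwdef
    set t' : Finset X :=
      (Finset.univ : Finset (Fin (N - n))).image
        (fun i => w (Fin.castLE (Nat.sub_le N n) i)) with ht'def
    have hinj : Function.Injective (fun i : Fin (N - n) => w (Fin.castLE (Nat.sub_le N n) i)) :=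
      fun i j h => Fin.castLE_injective _ (w.injective h)
    have ht'card : t'.card = N - n := by
      rw [ht'def, Finset.card_image_of_injective _ hinj]; simp
    refine ⟨↑t', ?_, ?_⟩
    · simp only [Finset.coe_sort_coe, Cardinal.mk_coe_finset, ht'card]
      exact_mod_cast Nat.cast_le.mpr (by omega : m ≤ N - n)
    · intro u v hu hv hequiv
      have hmem : ∀ (u : Fin n → X), (∀ i, u i ∈ (↑t' : Set X)) →
          ∀ i, ∃ kk : Fin N, (kk : ℕ) < N - n ∧ w kk = u i := by
        intro u hu i
        have := hu i
        rw [Finset.mem_coe, ht'def, Finset.mem_image] at this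
        obtain ⟨j, _, hj⟩ := this
        exact ⟨Fin.castLE (Nat.sub_le N n) j, by simpa using j.isLt, hj⟩
      obtain ⟨x, hxm, hxt, hxval⟩ := keyB t rfl hn u (hmem u hu)
      obtain ⟨y, hym, hyt, hyval⟩ := keyB t rfl hn v (hmem v hv)
      set p : Fin n → Fin n := fun i => ⟨rnk u i, rnk_lt u i⟩ with hp
      have hux : u = x ∘ p := funext fun i => (hxval i (rnk_lt u i)).symm
      have hvy : v = y ∘ p := by
        funext i
        have hri : rnk u i = rnk v i := rnk_congr hequiv i
        have hpi : p i = ⟨rnk v i, rnk_lt v i⟩ := Fin.ext hri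
        show v i = y (p i)
        rw [hpi, hyval i (rnk_lt v i)]
      have hgxy : g x = g y := hthom x y hxm hym hxt hyt
      calc f u = g x p := by rw [hux]
        _ = g y p := by rw [hgxy]
        _ = f v := by rw [hvy]
end

section
/- For any natural numbers k, m and any tuple (n₁,…,n_r) of natural numbers, there exists a number R such that for any linearly ordered set X with |X| ≥ R and any family of functions fᵢ : X^{nᵢ} → Fin k for i = 1,…,r, there is a subset Y ⊆ X with |Y| ≥ m such that each fᵢ is constant on every ∼-equivalence class of Y^{nᵢ}. -/
set_option autoImplicit false

open Finset

/-- Finite hypergraph Ramsey theorem, uniform over all linear orders. -/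
theorem hyperRamsey (c : ℕ) : ∀ (d m : ℕ), ∃ N : ℕ,
    ∀ (α : Type) [LinearOrder α] (S : Finset α) (χ : Finset α → Fin (c+1)),
      N ≤ S.card → ∃ Y : Finset α, Y ⊆ S ∧ m ≤ Y.card ∧
        ∀ A B : Finset α, A ⊆ Y → B ⊆ Y → A.card = d → B.card = d → χ A = χ B := by
  intro d
  induction d with
  | zero =>
    intro m
    refine ⟨m, fun α _ S χ hS => ⟨S, Finset.Subset.rfl, hS, fun A B _ _ hA hB => ?_⟩⟩
    rw [Finset.card_eq_zero.mp hA, Finset.card_eq_zero.mp hB]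
  | succ d IH =>
    have claim : ∀ (L tail : ℕ), ∃ M : ℕ,
        ∀ (α : Type) [LinearOrder α] (S : Finset α) (χ : Finset α → Fin (c+1)),
          M ≤ S.card → ∃ A T : Finset α, A ⊆ S ∧ T ⊆ S ∧ A.card = L ∧ tail ≤ T.card ∧
            (∀ a ∈ A, ∀ t ∈ T, a < t) ∧
            (∀ a ∈ A, ∀ e₁ e₂ : Finset α, e₁ ⊆ (A ∪ T).filter (a < ·) →
              e₂ ⊆ (A ∪ T).filter (a < ·) → e₁.card = d → e₂.card = d →
              χ (insert a e₁) = χ (insert a e₂)) := by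
      intro L
      induction L with
      | zero =>
        intro tail
        exact ⟨tail, fun α _ S χ hS =>
          ⟨∅, S, Finset.empty_subset _, Finset.Subset.rfl, rfl, hS, by simp, by simp⟩⟩
      | succ L IHL =>
        intro tail
        obtain ⟨N₁, hN₁⟩ := IHL tail
        obtain ⟨N₂, hN₂⟩ := IH N₁
        refine ⟨N₂ + 1, ?_⟩
        intro α _ S χ hS
        have hne : S.Nonempty := Finset.card_pos.mp (by omega)
        have haS : S.min' hne ∈ S := S.min'_mem hne
        set a := S.min' hne with ha
        have hcard' : N₂ ≤ (S.erase a).card := by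
          rw [Finset.card_erase_of_mem haS]; omega
        obtain ⟨Y', hY'sub, hY'card, hY'mono⟩ :=
          hN₂ α (S.erase a) (fun e => χ (insert a e)) hcard'
        obtain ⟨A', T', hA'sub, hT'sub, hA'card, hT'card, horder, hhomog⟩ :=
          hN₁ α Y' χ hY'card
        have hY'S : Y' ⊆ S.erase a := hY'sub
        have hA'Y : A' ⊆ Y' := hA'sub
        have hT'Y : T' ⊆ Y' := hT'sub
        have hnotmem : ∀ z ∈ Y', a < z := by
          intro z hz
          have hz' := hY'S hz
          rw [Finset.mem_erase] at hz'
          exact lt_of_le_of_ne (S.min'_le z hz'.2) (Ne.symm hz'.1)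
        have haA' : a ∉ A' := fun h => lt_irrefl a (hnotmem a (hA'Y h))
        refine ⟨insert a A', T', ?_, ?_, ?_, hT'card, ?_, ?_⟩
        · exact Finset.insert_subset haS (fun z hz => Finset.mem_of_mem_erase (hY'S (hA'Y hz)))
        · exact fun z hz => Finset.mem_of_mem_erase (hY'S (hT'Y hz))
        · rw [Finset.card_insert_of_notMem haA', hA'card]
        · intro b hb t ht
          rcases Finset.mem_insert.mp hb with rfl | hb'
          · exact hnotmem t (hT'Y ht)
          · exact horder b hb' t ht
        · intro b hb e₁ e₂ he₁ he₂ hc₁ hc₂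
          rcases Finset.mem_insert.mp hb with rfl | hb'
          · -- b = a : use monochromaticity of Y' for χ (insert a ·)
            have hsub : ∀ e : Finset α, e ⊆ (insert a A' ∪ T').filter (a < ·) → e ⊆ Y' := by
              intro e he z hz
              have := he hz
              rw [Finset.mem_filter, Finset.mem_union, Finset.mem_insert] at this
              rcases this with ⟨(rfl | hz') | hz', hlt⟩
              · exact absurd hlt (lt_irrefl _)
              · exact hA'Y hz'
              · exact hT'Y hz'
            exact hY'mono e₁ e₂ (hsub e₁ he₁) (hsub e₂ he₂) hc₁ hc₂
          · -- b ∈ A' : inherited homogeneity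
            have hab : a < b := hnotmem b (hA'Y hb')
            have hsub : ∀ e : Finset α, e ⊆ (insert a A' ∪ T').filter (b < ·) →
                e ⊆ (A' ∪ T').filter (b < ·) := by
              intro e he z hz
              have := he hz
              rw [Finset.mem_filter, Finset.mem_union, Finset.mem_insert] at this
              rw [Finset.mem_filter, Finset.mem_union]
              rcases this with ⟨(rfl | hz') | hz', hlt⟩
              · exact absurd (hab.trans hlt) (lt_irrefl _)
              · exact ⟨Or.inl hz', hlt⟩
              · exact ⟨Or.inr hz', hlt⟩
            exact hhomog b hb' e₁ e₂ (hsub e₁ he₁) (hsub e₂ he₂) hc₁ hc₂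
    -- now finish the succ case
    intro m
    obtain ⟨N, hN⟩ := claim ((c+1)*m + 1) d
    refine ⟨N, ?_⟩
    intro α _ S χ hS
    obtain ⟨A, T, hAS, hTS, hAcard, hTcard, horder, hhomog⟩ := hN α S χ hS
    obtain ⟨e₀, he₀T, he₀card⟩ := Finset.exists_subset_card_eq hTcard
    have hmaps : ∀ a ∈ A, χ (insert a e₀) ∈ (Finset.univ : Finset (Fin (c+1))) :=
      fun _ _ => Finset.mem_univ _
    have hlt : (Finset.univ : Finset (Fin (c+1))).card * m < A.card := by
      rw [Finset.card_univ, Fintype.card_fin, hAcard]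
      exact Nat.lt_succ_self _
    obtain ⟨b, -, hb⟩ :=
      Finset.exists_lt_card_fiber_of_mul_lt_card_of_maps_to hmaps hlt
    refine ⟨A.filter (fun a => χ (insert a e₀) = b),
      (Finset.filter_subset _ _).trans hAS, le_of_lt hb, ?_⟩
    have key : ∀ B : Finset α, B ⊆ A.filter (fun a => χ (insert a e₀) = b) →
        B.card = d + 1 → χ B = b := by
      intro B hBsub hBcard
      have hBne : B.Nonempty := Finset.card_pos.mp (by omega)
      have haB : B.min' hBne ∈ B := B.min'_mem hBne
      set a := B.min' hBne with hadef
      have haY := hBsub haB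
      rw [Finset.mem_filter] at haY
      have haA : a ∈ A := haY.1
      have hBA : B ⊆ A := hBsub.trans (Finset.filter_subset _ _)
      have hsub1 : B.erase a ⊆ (A ∪ T).filter (a < ·) := by
        intro z hz
        rw [Finset.mem_erase] at hz
        rw [Finset.mem_filter]
        exact ⟨Finset.mem_union_left _ (hBA hz.2),
          lt_of_le_of_ne (B.min'_le z hz.2) (Ne.symm hz.1)⟩
      have hsub2 : e₀ ⊆ (A ∪ T).filter (a < ·) := by
        intro z hz
        rw [Finset.mem_filter]
        exact ⟨Finset.mem_union_right _ (he₀T hz), horder a haA z (he₀T hz)⟩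
      have hec : (B.erase a).card = d := by
        rw [Finset.card_erase_of_mem haB, hBcard]
        omega
      have := hhomog a haA (B.erase a) e₀ hsub1 hsub2 hec he₀card
      rw [Finset.insert_erase haB] at this
      rw [this]
      exact haY.2
    intro A' B' hA' hB' hcA hcB
    rw [key A' hA' hcA, key B' hB' hcB]

/-- Chained version: a single set homogeneous for colorings of all arities `d ≤ D`. -/
theorem chainRamsey (c D : ℕ) : ∀ m : ℕ, ∃ N : ℕ,
    ∀ (α : Type) [LinearOrder α] (S : Finset α) (χ : ℕ → Finset α → Fin (c+1)),
      N ≤ S.card → ∃ Y : Finset α, Y ⊆ S ∧ m ≤ Y.card ∧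
        ∀ d, d ≤ D → ∀ A B : Finset α, A ⊆ Y → B ⊆ Y →
          A.card = d → B.card = d → χ d A = χ d B := by
  induction D with
  | zero =>
    intro m
    obtain ⟨N, hN⟩ := hyperRamsey c 0 m
    refine ⟨N, ?_⟩
    intro α _ S χ hS
    obtain ⟨Y, h1, h2, h3⟩ := hN α S (χ 0) hS
    refine ⟨Y, h1, h2, ?_⟩
    intro d hd A B hA hB hcA hcB
    have : d = 0 := Nat.le_zero.mp hd
    subst this
    exact h3 A B hA hB hcA hcB
  | succ D IHD =>
    intro m
    obtain ⟨N₁, h₁⟩ := IHD m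
    obtain ⟨N₂, h₂⟩ := hyperRamsey c (D+1) N₁
    refine ⟨N₂, ?_⟩
    intro α _ S χ hS
    obtain ⟨Y₁, hY₁S, hY₁c, hY₁m⟩ := h₂ α S (χ (D+1)) hS
    obtain ⟨Y, hYY₁, hYc, hYm⟩ := h₁ α Y₁ χ hY₁c
    refine ⟨Y, hYY₁.trans hY₁S, hYc, ?_⟩
    intro d hd A B hA hB hcA hcB
    rcases Nat.lt_succ_iff_lt_or_eq.mp (Nat.lt_succ_of_le hd) with h | rfl
    · exact hYm d (Nat.lt_succ_iff.mp h) A B hA hB hcA hcB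
    · exact hY₁m A B (hA.trans hYY₁) (hB.trans hYY₁) hcA hcB

/-- Tuples with equal kernels have images of equal cardinality. -/
theorem image_card_eq {ι β γ : Type} [DecidableEq β] [DecidableEq γ] (T : Finset ι)
    (x : ι → β) (y : ι → γ) (hker : ∀ l j, x l = x j ↔ y l = y j) :
    (T.image x).card = (T.image y).card := by
  apply Finset.card_bij (fun v hv => y (Finset.mem_image.mp hv).choose)
  · intro v hv
    have hc := (Finset.mem_image.mp hv).choose_spec
    exact Finset.mem_image.mpr ⟨_, hc.1, rfl⟩
  · intro v1 h1 v2 h2 heq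
    have c1 := (Finset.mem_image.mp h1).choose_spec
    have c2 := (Finset.mem_image.mp h2).choose_spec
    rw [← c1.2, ← c2.2]
    exact (hker _ _).mpr heq
  · intro w hw
    obtain ⟨l, hl, rfl⟩ := Finset.mem_image.mp hw
    have hx : x l ∈ T.image x := Finset.mem_image.mpr ⟨l, hl, rfl⟩
    refine ⟨x l, hx, ?_⟩
    exact ((hker _ _).mp (Finset.mem_image.mp hx).choose_spec.2)

/-- The rank of an element of a finset under the enumerating order isomorphism. -/
theorem rank_lemma {α : Type} [LinearOrder α] {d : ℕ} (V : Finset α) (h : V.card = d)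
    (v : α) (hv : v ∈ V) :
    (((V.orderIsoOfFin h).symm ⟨v, hv⟩ : Fin d) : ℕ) = (V.filter (· < v)).card := by
  set e := V.orderIsoOfFin h with he
  set a := e.symm ⟨v, hv⟩ with haa
  have himg : V.filter (· < v) =
      (Finset.univ.filter fun b : Fin d => b < a).image (fun b => (e b : α)) := by
    ext w
    simp only [Finset.mem_filter, Finset.mem_image, Finset.mem_univ, true_and]
    constructor
    · rintro ⟨hw, hwv⟩
      refine ⟨e.symm ⟨w, hw⟩, ?_, by simp⟩
      rw [haa]
      exact e.symm.lt_iff_lt.mpr (Subtype.mk_lt_mk.mpr hwv)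
    · rintro ⟨b, hb, rfl⟩
      refine ⟨(e b).2, ?_⟩
      have : e b < e a := e.lt_iff_lt.mpr hb
      have hea : (e a : α) = v := by rw [haa]; simp
      calc (e b : α) < (e a : α) := this
        _ = v := hea
  have hinj : Function.Injective (fun b : Fin d => (e b : α)) :=
    fun b1 b2 hb => e.injective (Subtype.coe_injective hb)
  rw [himg, Finset.card_image_of_injective _ hinj]
  have h2 : (Finset.univ.filter fun b : Fin d => b < a).image Fin.val
      = Finset.range (a : ℕ) := by
    ext k
    simp only [Finset.mem_image, Finset.mem_filter, Finset.mem_univ, true_and,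
      Finset.mem_range]
    constructor
    · rintro ⟨b, hb, rfl⟩; exact hb
    · intro hk
      exact ⟨⟨k, lt_trans hk a.2⟩, by exact hk, rfl⟩
  have := congrArg Finset.card h2
  rw [Finset.card_image_of_injective _ Fin.val_injective, Finset.card_range] at this
  rw [this]

/-- Full (unordered-index) version of order-type equivalence. -/
theorem ote_full {X : Type} [LinearOrder X] {t : ℕ} {x y : Fin t → X}
    (h : OrderTypeEquiv x y) :
    ∀ l j, (x l < x j ↔ y l < y j) ∧ (x l = x j ↔ y l = y j) := by
  intro l j
  rcases lt_trichotomy l j with hlt | rfl | hgt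
  · exact h l j hlt
  · simp
  · have h2 := h j l hgt
    have key : ∀ {β : Type} [LinearOrder β] (u v : β), (u < v) ↔ ¬(v < u ∨ v = u) := by
      intro β _ u v
      rw [← le_iff_lt_or_eq, lt_iff_not_ge]
    constructor
    · rw [key (x l) (x j), key (y l) (y j), h2.1, h2.2]
    · rw [eq_comm, h2.2, eq_comm]

/-- Ordered Ramsey theorem for several functions simultaneously: for all `k m` and
arities `n : Fin r → ℕ`, there is `R` such that any linearly ordered set `X` with
`|X| ≥ R` and any family `f i : X^(n i) → Fin k` admit a subset `Y` with `|Y| ≥ m`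
such that each `f i` is constant on every `∼`-equivalence class of `Y^(n i)`. -/
theorem ordered_ramsey_multi (k m r : ℕ) (n : Fin r → ℕ) :
    ∃ R : ℕ, ∀ (X : Type) (_ : LinearOrder X), (R : Cardinal) ≤ Cardinal.mk X →
      ∀ f : ∀ i : Fin r, (Fin (n i) → X) → Fin k,
        ∃ Y : Set X, (m : Cardinal) ≤ Cardinal.mk Y ∧
          ∀ (i : Fin r) (x y : Fin (n i) → X), (∀ j, x j ∈ Y) → (∀ j, y j ∈ Y) →
            OrderTypeEquiv x y → f i x = f i y := by
  classical
  set D := (Finset.univ : Finset (Fin r)).sup n with hD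
  set c1 := (Finset.range (D+1)).sup
    (fun d => Fintype.card (∀ i : Fin r, (Fin (n i) → Fin d) → Fin k)) with hc1
  have hcard : ∀ d, d ≤ D →
      Fintype.card (∀ i : Fin r, (Fin (n i) → Fin d) → Fin k) ≤ c1 + 1 := by
    intro d hd
    have h1 : Fintype.card (∀ i : Fin r, (Fin (n i) → Fin d) → Fin k) ≤ c1 := by
      rw [hc1]
      exact Finset.le_sup
        (f := fun d => Fintype.card (∀ i : Fin r, (Fin (n i) → Fin d) → Fin k))
        (Finset.mem_range.mpr (by omega))
    omega
  obtain ⟨N, hN⟩ := chainRamsey c1 D m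
  refine ⟨N, ?_⟩
  intro X instX hX f
  obtain ⟨g⟩ : Nonempty (Fin N ↪ X) := by
    rw [← Cardinal.mk_fin N] at hX
    exact Cardinal.le_def _ _ |>.mp hX
  set S : Finset X := Finset.univ.map g with hSdef
  have hScard : N ≤ S.card := by
    rw [hSdef, Finset.card_map, Finset.card_univ, Fintype.card_fin]
  set χ : ℕ → Finset X → Fin (c1+1) := fun d A =>
    if hd : d ≤ D then
      (if h : A.card = d then
        Fin.castLE (hcard d hd)
          ((Fintype.equivFin _)
            (fun i (p : Fin (n i) → Fin d) => f i (fun j => ((A.orderIsoOfFin h) (p j) : X))))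
      else 0)
    else 0 with hχdef
  obtain ⟨Y, hYS, hYcard, hmono⟩ := hN X S χ hScard
  refine ⟨(↑Y : Set X), ?_, ?_⟩
  · have hmk : Cardinal.mk (↑(↑Y : Set X)) = (Y.card : Cardinal) := by
      simp [Cardinal.mk_coe_finset]
    rw [hmk]
    exact_mod_cast Nat.cast_le.mpr hYcard
  · intro i x y hx hy hxy
    have hfull := ote_full hxy
    set V := (Finset.univ.image x) with hVdef
    set W := (Finset.univ.image y) with hWdef
    have hVY : V ⊆ Y := by
      intro v hv
      obtain ⟨l, -, rfl⟩ := Finset.mem_image.mp hv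
      exact hx l
    have hWY : W ⊆ Y := by
      intro v hv
      obtain ⟨l, -, rfl⟩ := Finset.mem_image.mp hv
      exact hy l
    have hWV : W.card = V.card :=
      (image_card_eq Finset.univ x y (fun l j => (hfull l j).2)).symm
    have hdD : V.card ≤ D := by
      refine le_trans (le_trans Finset.card_image_le ?_) (Finset.le_sup (Finset.mem_univ i))
      simp
    have hVd : V.card = V.card := rfl
    set eV := V.orderIsoOfFin hVd with heV
    set eW := W.orderIsoOfFin hWV with heW
    have hxV : ∀ j, x j ∈ V := fun j => Finset.mem_image.mpr ⟨j, Finset.mem_univ j, rfl⟩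
    have hyW : ∀ j, y j ∈ W := fun j => Finset.mem_image.mpr ⟨j, Finset.mem_univ j, rfl⟩
    set p : Fin (n i) → Fin V.card := fun j => eV.symm ⟨x j, hxV j⟩ with hp
    have hpx : ∀ j, (eV (p j) : X) = x j := by intro j; rw [hp]; simp
    have hpy : ∀ j, (eW (p j) : X) = y j := by
      intro j
      have hpj : p j = eW.symm ⟨y j, hyW j⟩ := by
        apply Fin.ext
        rw [hp]
        rw [rank_lemma V hVd (x j) (hxV j), rank_lemma W hWV (y j) (hyW j)]
        have h1 : V.filter (· < x j) = (Finset.univ.filter fun l => x l < x j).image x := by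
          ext w
          constructor
          · intro hw
            obtain ⟨hwV, hlt⟩ := Finset.mem_filter.mp hw
            obtain ⟨l, -, rfl⟩ := Finset.mem_image.mp hwV
            exact Finset.mem_image.mpr ⟨l, Finset.mem_filter.mpr ⟨Finset.mem_univ l, hlt⟩, rfl⟩
          · intro hw
            obtain ⟨l, hl, rfl⟩ := Finset.mem_image.mp hw
            exact Finset.mem_filter.mpr ⟨hxV l, (Finset.mem_filter.mp hl).2⟩
        have h2 : W.filter (· < y j) = (Finset.univ.filter fun l => y l < y j).image y := by
          ext w
          constructor
          · intro hw
            obtain ⟨hwV, hlt⟩ := Finset.mem_filter.mp hw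
            obtain ⟨l, -, rfl⟩ := Finset.mem_image.mp hwV
            exact Finset.mem_image.mpr ⟨l, Finset.mem_filter.mpr ⟨Finset.mem_univ l, hlt⟩, rfl⟩
          · intro hw
            obtain ⟨l, hl, rfl⟩ := Finset.mem_image.mp hw
            exact Finset.mem_filter.mpr ⟨hyW l, (Finset.mem_filter.mp hl).2⟩
        have h3 : (Finset.univ.filter fun l => x l < x j)
            = (Finset.univ.filter fun l => y l < y j) :=
          Finset.filter_congr (fun l _ => by rw [(hfull l j).1])
        rw [h1, h2, h3]
        exact image_card_eq _ x y (fun l j' => (hfull l j').2)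
      rw [hpj]
      simp
    have hχVW := hmono V.card hdD V W hVY hWY rfl hWV
    rw [hχdef] at hχVW
    simp only [dif_pos hdD, dif_pos hVd, dif_pos hWV] at hχVW
    have hgVW := (Fintype.equivFin _).injective (Fin.castLE_injective _ hχVW)
    have := congrFun (congrFun hgVW i) p
    calc f i x = f i (fun j => (eV (p j) : X)) := by
          congr 1; exact funext fun j => (hpx j).symm
      _ = f i (fun j => (eW (p j) : X)) := this
      _ = f i y := by congr 1; exact funext fun j => hpy j
end

section
/- Upward Löwenheim–Skolem for many-sorted logic (same cardinal for all infinite sorts): Let Σ be a many-sorted signature, 𝔸 a Σ-structure, and κ a cardinal with κ ≥ max(|Σ|, ℵ₀, sup{|σ^𝔸| : σ^𝔸 infinite}). Then there is a Σ-structure 𝔹 containing 𝔸 as an elementary substructure such that |σ^𝔹| = κ for every sort σ with σ^𝔸 infinite, and σ^𝔹 = σ^𝔸 for every sort σ with σ^𝔸 finite. -/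
set_option autoImplicit false

/-- A many-sorted first-order signature. -/
structure MSSignature : Type 1 where
  Sorts : Type
  Func : Type
  Pred : Type
  funcDom : Func → List Sorts
  funcCod : Func → Sorts
  predDom : Pred → List Sorts

namespace MS

variable (Sg : MSSignature)

/-- Many-sorted terms; variables of each sort are indexed by naturals. -/
inductive Term : Sg.Sorts → Type where
  | var (s : Sg.Sorts) (n : ℕ) : Term s
  | app (f : Sg.Func)
      (args : ∀ i : Fin (Sg.funcDom f).length, Term ((Sg.funcDom f).get i)) :
      Term (Sg.funcCod f)

/-- Many-sorted first-order formulas. -/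
inductive Formula : Type where
  | eq {s : Sg.Sorts} (t u : Term Sg s) : Formula
  | pred (P : Sg.Pred)
      (args : ∀ i : Fin (Sg.predDom P).length, Term Sg ((Sg.predDom P).get i)) : Formula
  | falsum : Formula
  | imp (φ ψ : Formula) : Formula
  | all (s : Sg.Sorts) (n : ℕ) (φ : Formula) : Formula

/-- A structure for a many-sorted signature: each sort gets a nonempty domain. -/
structure Structure : Type 1 where
  dom : Sg.Sorts → Type
  dom_nonempty : ∀ s, Nonempty (dom s)
  interpFunc : ∀ f : Sg.Func,
    (∀ i : Fin (Sg.funcDom f).length, dom ((Sg.funcDom f).get i)) → dom (Sg.funcCod f)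
  interpPred : ∀ P : Sg.Pred,
    (∀ i : Fin (Sg.predDom P).length, dom ((Sg.predDom P).get i)) → Prop

variable {Sg}

/-- Variable assignments. -/
def Assign (A : Structure Sg) : Type := ∀ s : Sg.Sorts, ℕ → A.dom s

open Classical in
noncomputable
def Assign.update {A : Structure Sg} (ν : Assign A) (s : Sg.Sorts) (n : ℕ) (a : A.dom s) :
    Assign A := fun t m =>
  if h : s = t then (if m = n then h ▸ a else ν t m) else ν t m

def Term.eval {A : Structure Sg} (ν : Assign A) : ∀ {s : Sg.Sorts}, Term Sg s → A.dom s
  | _, .var s n => ν s n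
  | _, .app f args => A.interpFunc f fun i => Term.eval ν (args i)

/-- Tarskian satisfaction. -/
def Sat (A : Structure Sg) (ν : Assign A) : Formula Sg → Prop
  | .eq t u => t.eval ν = u.eval ν
  | .pred P args => A.interpPred P fun i => (args i).eval ν
  | .falsum => False
  | .imp φ ψ => Sat A ν φ → Sat A ν ψ
  | .all s n φ => ∀ a : A.dom s, Sat A (ν.update s n a) φ

/-- Derived connectives. -/
def Formula.not (φ : Formula Sg) : Formula Sg := .imp φ .falsum
def Formula.and (φ ψ : Formula Sg) : Formula Sg := (Formula.imp φ ψ.not).not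
def Formula.or (φ ψ : Formula Sg) : Formula Sg := .imp φ.not ψ
def Formula.ex (s : Sg.Sorts) (n : ℕ) (φ : Formula Sg) : Formula Sg :=
  ((Formula.all s n φ.not)).not
def Formula.andList : List (Formula Sg) → Formula Sg :=
  List.foldr Formula.and (Formula.not .falsum)
def Formula.orList : List (Formula Sg) → Formula Sg :=
  List.foldr Formula.or .falsum

/-- Occurrence of variable `(s, n)` in a term. -/
def Term.varOccurs (s : Sg.Sorts) (n : ℕ) : ∀ {t : Sg.Sorts}, Term Sg t → Prop
  | _, .var s' n' => s = s' ∧ n = n'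
  | _, .app _ args => ∃ i, Term.varOccurs s n (args i)

/-- Free occurrence of variable `(s, n)` in a formula. -/
def Formula.varFree (s : Sg.Sorts) (n : ℕ) : Formula Sg → Prop
  | .eq t u => t.varOccurs s n ∨ u.varOccurs s n
  | .pred _ args => ∃ i, (args i).varOccurs s n
  | .falsum => False
  | .imp φ ψ => φ.varFree s n ∨ ψ.varFree s n
  | .all s' n' φ => φ.varFree s n ∧ ¬(s = s' ∧ n = n')

def Formula.IsSentence (φ : Formula Sg) : Prop := ∀ s n, ¬ φ.varFree s n

/-- Quantifier-free formulas. -/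
def Formula.IsQF : Formula Sg → Prop
  | .eq _ _ => True
  | .pred _ _ => True
  | .falsum => True
  | .imp φ ψ => φ.IsQF ∧ ψ.IsQF
  | .all _ _ _ => False

/-- A structure is a model of a set of formulas (a theory) if it satisfies
every axiom under every assignment. -/
def Models (A : Structure Sg) (T : Set (Formula Sg)) : Prop :=
  ∀ φ ∈ T, ∀ ν : Assign A, Sat A ν φ

/-- Elementary equivalence: same sentences hold. -/
def ElemEquiv (A B : Structure Sg) : Prop :=
  ∀ φ : Formula Sg, φ.IsSentence →
    ((∀ ν : Assign A, Sat A ν φ) ↔ (∀ ν : Assign B, Sat B ν φ))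

/-- Substructures: sort-wise subsets closed under the functions. -/
structure Substructure (A : Structure Sg) : Type 1 where
  carrier : ∀ s : Sg.Sorts, Set (A.dom s)
  carrier_nonempty : ∀ s, (carrier s).Nonempty
  closed : ∀ (f : Sg.Func)
    (args : ∀ i : Fin (Sg.funcDom f).length, A.dom ((Sg.funcDom f).get i)),
    (∀ i, args i ∈ carrier _) → A.interpFunc f args ∈ carrier _

/-- The induced structure on a substructure. -/
def Substructure.toStructure {A : Structure Sg} (B : Substructure A) : Structure Sg where
  dom s := ↥(B.carrier s)
  dom_nonempty s := ⟨⟨(B.carrier_nonempty s).choose, (B.carrier_nonempty s).choose_spec⟩⟩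
  interpFunc f args :=
    ⟨A.interpFunc f fun i => (args i).1, B.closed f _ fun i => (args i).2⟩
  interpPred P args := A.interpPred P fun i => (args i).1

/-- View an assignment into a substructure as an assignment into the ambient structure. -/
def Substructure.amb {A : Structure Sg} (B : Substructure A)
    (ν : Assign B.toStructure) : Assign A := fun s n => (ν s n).1

/-- `B` is an elementary substructure of `A`. -/
def Substructure.IsElementary {A : Structure Sg} (B : Substructure A) : Prop :=
  ∀ (φ : Formula Sg) (ν : Assign B.toStructure),
    Sat B.toStructure ν φ ↔ Sat A (B.amb ν) φ

/-- Isomorphisms of structures. -/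
structure Iso (A B : Structure Sg) : Type 1 where
  toEquiv : ∀ s, A.dom s ≃ B.dom s
  map_func : ∀ (f : Sg.Func) args,
    toEquiv _ (A.interpFunc f args) = B.interpFunc f (fun i => toEquiv _ (args i))
  map_pred : ∀ (P : Sg.Pred) args,
    A.interpPred P args ↔ B.interpPred P (fun i => toEquiv _ (args i))

end MS

/-- The cardinality of a signature: sorts + function symbols + predicate symbols. -/
noncomputable def MSSignature.card (Sg : MSSignature) : Cardinal :=
  Cardinal.mk Sg.Sorts + Cardinal.mk Sg.Func + Cardinal.mk Sg.Pred

/-- A countable signature. -/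
def MSSignature.IsCountable (Sg : MSSignature) : Prop :=
  Countable Sg.Sorts ∧ Countable Sg.Func ∧ Countable Sg.Pred

open MS Cardinal

/-! ### Auxiliary development for the proof -/

namespace LSAux

open FirstOrder MS Cardinal

variable (Sg : MSSignature)

/-- Function symbols of the one-sorted encoding. -/
inductive Fn : ℕ → Type where
  | func (f : Sg.Func) : Fn (Sg.funcDom f).length

/-- Relation symbols of the one-sorted encoding: predicates plus sort predicates. -/
inductive Rel : ℕ → Type where
  | pred (P : Sg.Pred) : Rel (Sg.predDom P).length
  | sort (s : Sg.Sorts) : Rel 1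

/-- The one-sorted encoding language. -/
abbrev L : FirstOrder.Language := ⟨Fn Sg, Rel Sg⟩

variable {Sg}

/-- Membership in a sort, in an `L Sg`-structure. -/
def InSort {N : Type} [(L Sg).Structure N] (s : Sg.Sorts) (x : N) : Prop :=
  Language.Structure.RelMap (L := L Sg) (Rel.sort s) (fun _ : Fin 1 => x)

/-- A "good" structure: sorts are nonempty and functions are sorted correctly. -/
structure Good (N : Type) [(L Sg).Structure N] : Prop where
  closed : ∀ (f : Sg.Func) (v : Fin (Sg.funcDom f).length → N),
      (∀ i, InSort ((Sg.funcDom f).get i) (v i)) →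
      InSort (Sg.funcCod f) (Language.Structure.funMap (L := L Sg) (Fn.func f) v)
  nonemp : ∀ s : Sg.Sorts, ∃ x : N, InSort s x

/-- The many-sorted structure extracted from a good one-sorted structure. -/
def MSify (N : Type) [(L Sg).Structure N] (h : Good (Sg := Sg) N) : MS.Structure Sg where
  dom s := {x : N // InSort s x}
  dom_nonempty s := by obtain ⟨x, hx⟩ := h.nonemp s; exact ⟨⟨x, hx⟩⟩
  interpFunc f args :=
    ⟨Language.Structure.funMap (L := L Sg) (Fn.func f) (fun i => (args i).1),
      h.closed f _ (fun i => (args i).2)⟩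
  interpPred P args :=
    Language.Structure.RelMap (L := L Sg) (Rel.pred P) (fun i => (args i).1)

/-- Translation of many-sorted terms. -/
def trTerm : ∀ {s : Sg.Sorts}, MS.Term Sg s → (L Sg).Term (Sg.Sorts × ℕ)
  | _, .var s n => Language.Term.var (s, n)
  | _, .app f args => Language.Term.func (L := L Sg) (Fn.func f) (fun i => trTerm (args i))

open Classical in
/-- Translation of many-sorted formulas. -/
noncomputable def trFml : MS.Formula Sg → (L Sg).Formula (Sg.Sorts × ℕ)
  | .eq t u => Language.Term.equal (trTerm t) (trTerm u)
  | .pred P args =>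
      Language.Relations.formula (L := L Sg) (Rel.pred P) (fun i => trTerm (args i))
  | .falsum => ⊥
  | .imp φ ψ => Language.BoundedFormula.imp (trFml φ) (trFml ψ)
  | .all s n φ =>
      Language.BoundedFormula.all
        (Language.BoundedFormula.imp
          (Language.Relations.boundedFormula₁ (L := L Sg) (Rel.sort s)
            (Language.Term.var (Sum.inr (0 : Fin 1))))
          (Language.BoundedFormula.relabel
            (fun p : Sg.Sorts × ℕ => if p = (s, n) then Sum.inr (0 : Fin 1) else Sum.inl p)
            (trFml φ)))

section Master

open Language

variable {N : Type} [(L Sg).Structure N] {h : Good (Sg := Sg) N}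

/-- Valuation in `N` induced by a many-sorted assignment. -/
def val (ν : Assign (MSify N h)) : Sg.Sorts × ℕ → N := fun p => (ν p.1 p.2).1

lemma trTerm_realize (ν : Assign (MSify N h)) {s : Sg.Sorts} (t : MS.Term Sg s) :
    (trTerm t).realize (val ν) = (MS.Term.eval ν t).1 := by
  induction t with
  | var s n => rfl
  | app f args ih =>
      show Structure.funMap (L := L Sg) (Fn.func f) _ = _
      simp only [MS.Term.eval, MSify]
      congr 1
      funext i
      exact ih i


lemma vec_one (x : N) : (![x] : Fin 1 → N) = fun _ : Fin 1 => x :=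
  funext fun i => Matrix.cons_val_fin_one x _ i

lemma insort_vec {s : Sg.Sorts} (x : N) :
    Language.Structure.RelMap (L := L Sg) (Rel.sort s) ![x] ↔ InSort s x := by
  rw [vec_one]; exact Iff.rfl

open Classical in
lemma val_update (ν : Assign (MSify N h)) (s : Sg.Sorts) (n : ℕ) (a : (MSify N h).dom s) :
    (Sum.elim (val ν) ((Fin.snoc (default : Fin 0 → N) a.1) ∘ Fin.castAdd 0) ∘
      fun p : Sg.Sorts × ℕ => if p = (s, n) then Sum.inr (0 : Fin 1) else Sum.inl p)
    = val (ν.update s n a) := by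
  funext p
  obtain ⟨t, m⟩ := p
  by_cases hp : (t, m) = (s, n)
  · rw [Prod.mk.injEq] at hp
    obtain ⟨rfl, rfl⟩ := hp
    simp [val, Assign.update, Fin.snoc]
  · simp only [Function.comp_apply, if_neg hp, Sum.elim_inl]
    simp only [val, Assign.update]
    by_cases hts : s = t
    · subst hts
      have hmn : m ≠ n := fun hmn => hp (by rw [hmn])
      simp [if_neg hmn]
    · simp [dif_neg hts]

lemma sat_iff_realize (φ : MS.Formula Sg) :
    ∀ ν : Assign (MSify N h), MS.Sat (MSify N h) ν φ ↔ (trFml φ).Realize (val ν) := by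
  induction φ with
  | eq t u =>
      intro ν
      show _ ↔ (Term.equal _ _).Realize _
      rw [Formula.realize_equal, trTerm_realize, trTerm_realize]
      exact (Subtype.val_inj).symm
  | pred P args =>
      intro ν
      show _ ↔ (Relations.formula _ _).Realize _
      rw [Formula.realize_rel]
      show MS.Sat _ _ _ ↔ Structure.RelMap (L := L Sg) (Rel.pred P) _ 
      have : (fun i => (trTerm (args i)).realize (val ν)) =
          fun i => (MS.Term.eval ν (args i)).1 := funext fun i => trTerm_realize ν (args i)
      rw [this]
      exact Iff.rfl
  | falsum => intro ν; simp [MS.Sat, trFml]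
  | imp φ ψ ihφ ihψ =>
      intro ν
      show (MS.Sat _ ν φ → MS.Sat _ ν ψ) ↔ (Formula.Realize (L := L Sg) _ _)
      simp only [trFml]
      rw [Formula.realize_imp, ihφ, ihψ]
  | all s n φ ih =>
      intro ν
      show (∀ a, MS.Sat _ _ φ) ↔ Formula.Realize (L := L Sg) _ _
      simp only [trFml]
      rw [Formula.Realize]
      rw [BoundedFormula.realize_all]
      have hxs : ∀ d : N, ((Fin.snoc (default : Fin 0 → N) d) ∘ Fin.natAdd 1 : Fin 0 → N)
          = default := fun d => funext fun i => i.elim0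
      have hvar : ∀ d : N, Language.Term.realize (L := L Sg)
          (Sum.elim (val (h := h) ν) (Fin.snoc (default : Fin 0 → N) d))
          (Language.Term.var (Sum.inr (0 : Fin 1))) = d := by
        intro d; simp [Fin.snoc]
      constructor
      · intro H d
        rw [BoundedFormula.realize_imp, BoundedFormula.realize_rel₁,
          BoundedFormula.realize_relabel]
        intro hd
        rw [hvar d, insort_vec] at hd
        have hsat := (ih (ν.update s n ⟨d, hd⟩)).1 (H ⟨d, hd⟩)
        rw [Formula.Realize] at hsat
        rw [hxs d, val_update ν s n ⟨d, hd⟩]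
        exact hsat
      · intro H a
        have := H a.1
        rw [BoundedFormula.realize_imp, BoundedFormula.realize_rel₁,
          BoundedFormula.realize_relabel, hvar a.1, insort_vec, hxs a.1,
          val_update ν s n a] at this
        rw [ih (ν.update s n a)]
        exact this a.2

end Master
section IsoTransfer

variable {A B : MS.Structure Sg}

/-- The image of an assignment under an isomorphism. -/
def isoAssign (e : Iso A B) (ν : Assign A) : Assign B := fun s n => e.toEquiv s (ν s n)

lemma iso_eval (e : Iso A B) (ν : Assign A) {s : Sg.Sorts} (t : MS.Term Sg s) :
    MS.Term.eval (isoAssign e ν) t = e.toEquiv s (MS.Term.eval ν t) := by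
  induction t with
  | var s n => rfl
  | app f args ih =>
      show B.interpFunc f _ = e.toEquiv _ (A.interpFunc f fun i => MS.Term.eval ν (args i))
      rw [e.map_func]
      congr 1
      funext i
      exact ih i

lemma iso_update (e : Iso A B) (ν : Assign A) (s : Sg.Sorts) (n : ℕ) (a : A.dom s) :
    (isoAssign e ν).update s n (e.toEquiv s a) = isoAssign e (ν.update s n a) := by
  funext t m
  simp only [Assign.update, isoAssign]
  by_cases hts : s = t
  · subst hts
    by_cases hmn : m = n <;> simp [hmn]
  · simp [dif_neg hts]

lemma sat_iso (e : Iso A B) (φ : MS.Formula Sg) :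
    ∀ ν : Assign A, MS.Sat A ν φ ↔ MS.Sat B (isoAssign e ν) φ := by
  induction φ with
  | eq t u =>
      intro ν
      show _ ↔ (MS.Term.eval _ t = MS.Term.eval _ u)
      rw [iso_eval, iso_eval]
      exact (Equiv.apply_eq_iff_eq _).symm
  | pred P args =>
      intro ν
      show A.interpPred P _ ↔ B.interpPred P _
      rw [e.map_pred]
      constructor
      · intro h'
        convert h' using 2
        exact iso_eval e ν (args _)
      · intro h'
        convert h' using 2
        exact (iso_eval e ν (args _)).symm
  | falsum => exact fun ν => Iff.rfl
  | imp φ ψ ihφ ihψ =>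
      intro ν
      show (_ → _) ↔ (_ → _)
      rw [ihφ, ihψ]
  | all s n φ ih =>
      intro ν
      show (∀ a : A.dom s, _) ↔ (∀ b : B.dom s, _)
      apply Equiv.forall_congr (e.toEquiv s)
      intro a
      rw [iso_update]
      exact ih _

end IsoTransfer
section Base

open Language

variable (A : MS.Structure Sg)

/-- The disjoint union of all the sorts of `A`, plus a junk element. -/
abbrev D := Option (Σ s : Sg.Sorts, A.dom s)

instance : Nonempty (D A) := ⟨none⟩

open Classical in
noncomputable instance instDStruct : (L Sg).Structure (D A) where
  funMap := fun {n} f v =>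
    match f, v with
    | .func f, v =>
      if h : ∃ args : ∀ i : Fin (Sg.funcDom f).length, A.dom ((Sg.funcDom f).get i),
          ∀ i, v i = some ⟨_, args i⟩
      then some ⟨Sg.funcCod f, A.interpFunc f h.choose⟩
      else none
  RelMap := fun {n} r v =>
    match r, v with
    | .pred P, v => ∃ args : ∀ i : Fin (Sg.predDom P).length, A.dom ((Sg.predDom P).get i),
        (∀ i, v i = some ⟨_, args i⟩) ∧ A.interpPred P args
    | .sort s, v => ∃ a : A.dom s, v 0 = some ⟨s, a⟩

variable {A}

lemma some_inj {s : Sg.Sorts} {a b : A.dom s} (h : (some ⟨s, a⟩ : D A) = some ⟨s, b⟩) :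
    a = b := by simpa using h

open Classical in
lemma funMap_app (f : Sg.Func) (args : ∀ i : Fin (Sg.funcDom f).length,
    A.dom ((Sg.funcDom f).get i)) :
    Structure.funMap (L := L Sg) (M := D A) (Fn.func f) (fun i => some ⟨_, args i⟩) =
      some ⟨Sg.funcCod f, A.interpFunc f args⟩ := by
  show (if h : _ then _ else _) = _
  rw [dif_pos ⟨args, fun i => rfl⟩]
  have : (⟨args, fun i => rfl⟩ : ∃ args' : ∀ i : Fin (Sg.funcDom f).length,
      A.dom ((Sg.funcDom f).get i), ∀ i, (fun i => (some ⟨_, args i⟩ : D A)) i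
        = some ⟨_, args' i⟩).choose = args := by
    funext i
    exact (some_inj ((⟨args, fun i => rfl⟩ : ∃ args' : ∀ i : Fin (Sg.funcDom f).length,
      A.dom ((Sg.funcDom f).get i), ∀ i, (fun i => (some ⟨_, args i⟩ : D A)) i
        = some ⟨_, args' i⟩).choose_spec i)).symm
  rw [this]

lemma relMap_pred (P : Sg.Pred) (args : ∀ i : Fin (Sg.predDom P).length,
    A.dom ((Sg.predDom P).get i)) :
    Structure.RelMap (L := L Sg) (M := D A) (Rel.pred P) (fun i => some ⟨_, args i⟩) ↔
      A.interpPred P args := by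
  show (∃ args', _ ∧ _) ↔ _
  constructor
  · rintro ⟨args', hv, hP⟩
    have : args' = args := funext fun i => (some_inj (hv i)).symm
    exact this ▸ hP
  · exact fun hP => ⟨args, fun i => rfl, hP⟩

lemma insort_iff {s : Sg.Sorts} (x : D A) :
    InSort (Sg := Sg) s x ↔ ∃ a : A.dom s, x = some ⟨s, a⟩ :=
  Iff.rfl

lemma goodD : Good (Sg := Sg) (D A) := by
  constructor
  · intro f v hv
    have hargs : ∀ i, ∃ a : A.dom ((Sg.funcDom f).get i), v i = some ⟨_, a⟩ :=
      fun i => (insort_iff (v i)).1 (hv i)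
    choose args hargs using hargs
    have hveq : v = fun i => some ⟨_, args i⟩ := funext hargs
    rw [insort_iff, hveq, funMap_app]
    exact ⟨A.interpFunc f args, rfl⟩
  · intro s
    obtain ⟨a⟩ := A.dom_nonempty s
    exact ⟨some ⟨s, a⟩, (insort_iff _).2 ⟨a, rfl⟩⟩

/-- `A` is isomorphic to the many-sorted structure extracted from `D A`. -/
noncomputable def isoD : Iso A (MSify (D A) goodD) where
  toEquiv s :=
    { toFun := fun a => ⟨some ⟨s, a⟩, (insort_iff _).2 ⟨a, rfl⟩⟩
      invFun := fun x => ((insort_iff x.1).1 x.2).choose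
      left_inv := by
        intro a
        exact (some_inj (((insort_iff (some ⟨s, a⟩)).1
          ((insort_iff _).2 ⟨a, rfl⟩)).choose_spec)).symm
      right_inv := by
        rintro ⟨x, hx⟩
        exact Subtype.ext (((insort_iff x).1 hx).choose_spec).symm }
  map_func f args := Subtype.ext (funMap_app f args).symm
  map_pred P args := (relMap_pred P args).symm

end Base
section Sentences

open Language

variable (Sg) in
/-- The sentence asserting that a function symbol maps sorted tuples to its codomain sort. -/
noncomputable def closedSentence (f : Sg.Func) : (L Sg).Sentence :=
  ((Language.BoundedFormula.iInf
      (fun i : Fin (Sg.funcDom f).length =>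
        Language.Relations.boundedFormula₁ (L := L Sg) (Rel.sort ((Sg.funcDom f).get i))
          (Language.Term.var (Sum.inr i)))).imp
    (Language.Relations.boundedFormula₁ (L := L Sg) (Rel.sort (Sg.funcCod f))
      (Language.Term.func (Fn.func f) (fun i => Language.Term.var (Sum.inr i))))).alls

variable (Sg) in
/-- The sentence asserting that a sort is nonempty. -/
def nonempSentence (s : Sg.Sorts) : (L Sg).Sentence :=
  (Language.Relations.boundedFormula₁ (L := L Sg) (Rel.sort s)
    (Language.Term.var (Sum.inr (0 : Fin 1)))).ex

variable {N : Type} [(L Sg).Structure N]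

lemma realize_closedSentence (f : Sg.Func) :
    N ⊨ closedSentence Sg f ↔
      ∀ v : Fin (Sg.funcDom f).length → N,
        (∀ i, InSort ((Sg.funcDom f).get i) (v i)) →
        InSort (Sg.funcCod f) (Language.Structure.funMap (L := L Sg) (Fn.func f) v) := by
  rw [Sentence.Realize, closedSentence, BoundedFormula.realize_alls]
  apply forall_congr'
  intro v
  rw [BoundedFormula.realize_imp, BoundedFormula.realize_iInf]
  constructor
  · intro H hv
    have := H (fun i => by
      rw [BoundedFormula.realize_rel₁]
      show Language.Structure.RelMap (L := L Sg) _ _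
      rw [vec_one]
      exact hv i)
    rw [BoundedFormula.realize_rel₁] at this
    unfold InSort
    rw [← vec_one]
    convert this using 2 <;> simp [Fin.snoc]
  · intro H hv
    have hv' : ∀ i, InSort ((Sg.funcDom f).get i) (v i) := by
      intro i
      have := hv i
      rw [BoundedFormula.realize_rel₁] at this
      unfold InSort
      rw [← vec_one]
      convert this using 2 <;> simp [Fin.snoc]
    have := H hv'
    rw [BoundedFormula.realize_rel₁]
    show Language.Structure.RelMap (L := L Sg) _ _
    rw [vec_one]
    unfold InSort at this
    convert this using 2 <;> simp [Fin.snoc]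

lemma realize_nonempSentence (s : Sg.Sorts) :
    N ⊨ nonempSentence Sg s ↔ ∃ x : N, InSort s x := by
  rw [Sentence.Realize, nonempSentence, Formula.Realize, BoundedFormula.realize_ex]
  apply exists_congr
  intro x
  rw [BoundedFormula.realize_rel₁]
  unfold InSort
  rw [← vec_one]
  constructor <;> intro h' <;> convert h' using 2 <;> simp [Fin.snoc]

lemma good_of_models (hc : ∀ f : Sg.Func, N ⊨ closedSentence Sg f)
    (hn : ∀ s : Sg.Sorts, N ⊨ nonempSentence Sg s) : Good (Sg := Sg) N :=
  ⟨fun f v hv => (realize_closedSentence f).1 (hc f) v hv,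
    fun s => (realize_nonempSentence s).1 (hn s)⟩

end Sentences
section FiniteSort

open Language

variable (Sg) in
/-- A formula (with a free variable for each element of `X`) saying that sort `s` is contained
in the image of the valuation. -/
noncomputable def boundedFml (s : Sg.Sorts) (X : Type) [Fintype X] : (L Sg).Formula X :=
  ((Language.Relations.boundedFormula₁ (L := L Sg) (Rel.sort s)
      (Language.Term.var (Sum.inr (0 : Fin 1)))).imp
    (Language.BoundedFormula.iSup
      (fun a : X => Language.Term.bdEqual
        (Language.Term.var (Sum.inr (0 : Fin 1))) (Language.Term.var (Sum.inl a))))).all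

variable {N : Type} [(L Sg).Structure N]

lemma realize_boundedFml {s : Sg.Sorts} {X : Type} [Fintype X] (v : X → N) :
    (boundedFml Sg s X).Realize v ↔ ∀ x : N, InSort s x → ∃ a : X, x = v a := by
  rw [boundedFml, Formula.Realize, BoundedFormula.realize_all]
  apply forall_congr'
  intro x
  rw [BoundedFormula.realize_imp, BoundedFormula.realize_rel₁, BoundedFormula.realize_iSup]
  have hvar : Language.Term.realize (L := L Sg)
      (Sum.elim v (Fin.snoc (default : Fin 0 → N) x))
      (Language.Term.var (Sum.inr (0 : Fin 1))) = x := by simp [Fin.snoc]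
  constructor
  · intro H hx
    have hx' : Language.Structure.RelMap (L := L Sg) (Rel.sort s) ![x] := by
      rw [vec_one]; exact hx
    rw [← hvar] at hx'
    obtain ⟨a, ha⟩ := H hx'
    rw [BoundedFormula.realize_bdEqual, hvar] at ha
    exact ⟨a, by simpa using ha⟩
  · intro H hsort
    have hx : InSort s x := by
      rw [hvar, vec_one] at hsort
      exact hsort
    obtain ⟨a, ha⟩ := H hx
    refine ⟨a, ?_⟩
    rw [BoundedFormula.realize_bdEqual, hvar]
    simpa using ha

end FiniteSort
section Compactness

open Language Cardinal Set

variable (A : MS.Structure Sg) (κ : Cardinal.{0})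

/-- Index type for the new constants: one for each element of `κ` in each infinite sort. -/
def SI : Type := {s : Sg.Sorts // Infinite (A.dom s)} × κ.out

/-- The sentence asserting that the `p`-th new constant lies in its sort. -/
def sortCon (p : SI A κ) : ((L Sg)[[D A]][[SI A κ]]).Sentence :=
  Language.Relations.formula (Sum.inl (Sum.inl (Rel.sort p.1.1)))
    (fun _ : Fin 1 => (((L Sg)[[D A]]).con p).term)

/-- The finite stages of the theory used for compactness. -/
def stage (u : Finset (SI A κ)) : ((L Sg)[[D A]][[SI A κ]]).Theory :=
  ((((L Sg)[[D A]]).lhomWithConstants (SI A κ)).onTheory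
      ((L Sg).elementaryDiagram (D A)) ∪
    ((L Sg)[[D A]]).distinctConstantsTheory ↑u) ∪
  ⋃ p ∈ (u : Set (SI A κ)), {sortCon A κ p}

lemma stage_mono : Monotone (stage A κ) := by
  intro u v huv
  unfold stage
  apply Set.union_subset_union
  · apply Set.union_subset_union subset_rfl
    exact Language.distinctConstantsTheory_mono (by exact_mod_cast huv)
  · exact Set.biUnion_subset_biUnion_left (by exact_mod_cast huv)

lemma stage_sat (u : Finset (SI A κ)) : ((stage A κ u).IsSatisfiable) := by
  classical
  -- interpret the constants in `D A`
  let c : SI A κ → D A := fun p =>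
    if hp : p ∈ u
    then some ⟨p.1.1, (@Infinite.natEmbedding (A.dom p.1.1) p.1.2) (u.toList.idxOf p)⟩
    else none
  have hcinj : Set.InjOn c ↑u := by
    intro p hp q hq h
    rw [Finset.mem_coe] at hp hq
    simp only [c, dif_pos hp, dif_pos hq] at h
    obtain ⟨⟨s, hs⟩, i⟩ := p
    obtain ⟨⟨t, ht⟩, j⟩ := q
    rw [Option.some.injEq] at h
    obtain ⟨h1, h2⟩ := Sigma.mk.inj_iff.mp h
    dsimp only at h1
    subst h1
    cases Subsingleton.elim hs ht
    have h3 := (@Infinite.natEmbedding (A.dom s) hs).injective (eq_of_heq h2)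
    have := (List.idxOf_inj (Finset.mem_toList.2 hp)).1 h3
    exact this
  have hcsort : ∀ p ∈ u, InSort (Sg := Sg) p.1.1 (c p) := by
    intro p hp
    rw [insort_iff]
    refine ⟨(@Infinite.natEmbedding (A.dom p.1.1) p.1.2) (u.toList.idxOf p), ?_⟩
    simp only [c, dif_pos hp]
  letI : (Language.constantsOn (SI A κ)).Structure (D A) := Language.constantsOn.structure c
  have hmodel : (D A) ⊨ stage A κ u := by
    refine Language.Theory.Model.union (Language.Theory.Model.union ?_ ?_) ?_
    · exact (Language.LHom.onTheory_model _ _).2 inferInstance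
    · rw [Language.model_distinctConstantsTheory]
      exact hcinj
    · rw [Language.Theory.model_iff]
      intro φ hφ
      simp only [Set.mem_iUnion, Set.mem_singleton_iff] at hφ
      obtain ⟨p, hp, rfl⟩ := hφ
      rw [Finset.mem_coe] at hp
      show (sortCon A κ p).Realize (D A)
      rw [sortCon, Language.Sentence.Realize]
      refine Language.Formula.realize_rel.2 ?_
      have hreal : (fun _ : Fin 1 => Language.Term.realize (default : Empty → D A)
          ((((L Sg)[[D A]]).con p).term)) = fun _ : Fin 1 =>
            ((((L Sg)[[D A]]).con p : ((L Sg)[[D A]][[SI A κ]]).Constants) : D A) :=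
        funext fun i => Language.Term.realize_constants
      erw [hreal]
      exact hcsort p hp
  haveI := hmodel
  exact Language.Theory.Model.isSatisfiable (D A)

/-- The key compactness consequence: an elementary extension of `D A` with `κ.out`-many
distinct constants in each infinite sort. -/
lemma exists_big_ext : ∃ (W : Type) (_ : (L Sg).Structure W) (_ : Nonempty W)
    (g : (D A) ↪ₑ[L Sg] W) (c : SI A κ → W),
    Function.Injective c ∧ ∀ p : SI A κ, InSort p.1.1 (c p) := by
  classical
  have hsat : Language.Theory.IsSatisfiable (⋃ u : Finset (SI A κ), stage A κ u) := by
    rw [Language.Theory.isSatisfiable_directed_union_iff (stage_mono A κ).directed_le]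
    exact stage_sat A κ
  obtain ⟨W0⟩ := hsat
  letI i2 : ((L Sg)[[D A]][[SI A κ]]).Structure W0.Carrier := W0.struc
  letI i1 : ((L Sg)[[D A]]).Structure W0.Carrier :=
    ((((L Sg)[[D A]]).lhomWithConstants (SI A κ))).reduct W0.Carrier
  letI i0 : (L Sg).Structure W0.Carrier :=
    (((L Sg)).lhomWithConstants (D A)).reduct W0.Carrier
  haveI e1 : ((((L Sg)[[D A]]).lhomWithConstants (SI A κ))).IsExpansionOn W0.Carrier :=
    Language.LHom.isExpansionOn_reduct _ _
  haveI e0 : (((L Sg)).lhomWithConstants (D A)).IsExpansionOn W0.Carrier :=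
    Language.LHom.isExpansionOn_reduct _ _
  haveI hmod : W0.Carrier ⊨ (⋃ u : Finset (SI A κ), stage A κ u) := W0.is_model
  have hstage : ∀ u : Finset (SI A κ), W0.Carrier ⊨ stage A κ u := by
    intro u
    exact hmod.mono (Set.subset_iUnion _ u)
  haveI hdiag : W0.Carrier ⊨ (L Sg).elementaryDiagram (D A) := by
    have h1 := (hstage ∅).mono (Set.subset_union_left.trans Set.subset_union_left)
    exact (Language.LHom.onTheory_model _ _).1 h1
  refine ⟨W0.Carrier, i0, inferInstance,
    Language.ElementaryEmbedding.ofModelsElementaryDiagram (L Sg) (D A) W0.Carrier,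
    fun p => ((((L Sg)[[D A]]).con p : ((L Sg)[[D A]][[SI A κ]]).Constants) : W0.Carrier),
    ?_, ?_⟩
  · -- injectivity
    intro p q hpq
    by_contra hne
    have hmem : (Language.Term.equal (α := Empty) ((((L Sg)[[D A]]).con p).term)
        ((((L Sg)[[D A]]).con q).term)).not ∈ stage A κ {p, q} := by
      apply Set.mem_union_left
      apply Set.mem_union_right
      rw [Language.distinctConstantsTheory]
      refine ⟨(p, q), ⟨⟨?_, ?_⟩, hne⟩, rfl⟩ <;> simp
    have := (hstage {p, q}).realize_of_mem _ hmem
    rw [Language.Sentence.Realize, Language.Formula.realize_not,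
      Language.Formula.realize_equal] at this
    simp only [Language.Term.realize_constants] at this
    exact this hpq
  · -- sorts
    intro p
    have hmem : sortCon A κ p ∈ stage A κ {p} := by
      apply Set.mem_union_right
      simp
    have := (hstage {p}).realize_of_mem _ hmem
    rw [sortCon, Language.Sentence.Realize] at this
    replace this := Language.Formula.realize_rel.1 this
    have hreal : (fun _ : Fin 1 => Language.Term.realize (default : Empty → W0.Carrier)
        ((((L Sg)[[D A]]).con p).term)) =
        fun _ : Fin 1 => ((((L Sg)[[D A]]).con p :
          ((L Sg)[[D A]][[SI A κ]]).Constants) : W0.Carrier) :=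
      funext fun i => Language.Term.realize_constants
    rw [hreal] at this
    exact this

end Compactness
section Package

open Language Cardinal

lemma insort_map {M N : Type} [(L Sg).Structure M] [(L Sg).Structure N]
    (g : M ↪ₑ[L Sg] N) {s : Sg.Sorts} (x : M) : InSort s (g x) ↔ InSort s x :=
  g.map_rel (Rel.sort s) (fun _ => x)

/-- Restrict the codomain of an elementary embedding to an elementary substructure
containing its range. -/
noncomputable def eeCodRestrict {L' : FirstOrder.Language} {M W : Type*} [L'.Structure M]
    [L'.Structure W] (S' : L'.ElementarySubstructure W) (g : M ↪ₑ[L'] W)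
    (h : ∀ x, g x ∈ S') : M ↪ₑ[L'] S' where
  toFun x := ⟨g x, h x⟩
  map_formula' := by
    intro n φ x
    have h1 := S'.subtype.map_formula φ (fun i => (⟨g (x i), h (x i)⟩ : S'))
    have h2 := g.map_formula φ x
    exact Iff.trans (Iff.symm h1) h2

lemma eeCodRestrict_apply {L' : FirstOrder.Language} {M W : Type*} [L'.Structure M]
    [L'.Structure W] (S' : L'.ElementarySubstructure W) (g : M ↪ₑ[L'] W)
    (h : ∀ x, g x ∈ S') (x : M) : (eeCodRestrict S' g h x : W) = g x := rfl

/-- The main construction: given an elementary extension of `D A`, build a many-sorted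
elementary extension of `A`. -/
lemma package (A : MS.Structure Sg) {N : Type} [(L Sg).Structure N]
    (g : (D A) ↪ₑ[L Sg] N) :
    ∃ (B : MS.Structure Sg) (C : MS.Substructure B), C.IsElementary ∧
      Nonempty (Iso A C.toStructure) ∧
      (∀ s : Sg.Sorts, B.dom s = {x : N // InSort s x}) ∧
      (∀ s : Sg.Sorts,
        (∀ x : N, InSort s x → ∃ a : A.dom s, x = g (some ⟨s, a⟩)) →
        C.carrier s = Set.univ ∧ #(B.dom s) = #(A.dom s)) := by
  classical
  have hgood : Good (Sg := Sg) N := good_of_models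
    (fun f => (g.map_sentence _).1 ((realize_closedSentence f).2 ((goodD (A := A)).closed f)))
    (fun s => (g.map_sentence _).1 ((realize_nonempSentence s).2 ((goodD (A := A)).nonemp s)))
  refine ⟨MSify N hgood, ?_⟩
  set B := MSify N hgood with hB
  have hins : ∀ (s : Sg.Sorts) (a : A.dom s), InSort (Sg := Sg) s (g (some ⟨s, a⟩)) :=
    fun s a => (insort_map g _).2 ((insort_iff _).2 ⟨a, rfl⟩)
  let emb : ∀ s : Sg.Sorts, A.dom s → B.dom s := fun s a => ⟨g (some ⟨s, a⟩), hins s a⟩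
  have hembinj : ∀ s, Function.Injective (emb s) := by
    intro s a b h
    exact some_inj (g.injective (congrArg Subtype.val h))
  have hembfun : ∀ (f : Sg.Func) (args : ∀ i, A.dom ((Sg.funcDom f).get i)),
      B.interpFunc f (fun i => emb _ (args i)) = emb _ (A.interpFunc f args) := by
    intro f args
    apply Subtype.ext
    show Language.Structure.funMap (L := L Sg) (Fn.func f)
      (fun i => g (some ⟨_, args i⟩)) = g (some ⟨_, A.interpFunc f args⟩)
    have h1 : (fun i => g (some ⟨(Sg.funcDom f).get i, args i⟩)) =
        g ∘ (fun i => (some ⟨(Sg.funcDom f).get i, args i⟩ : D A)) := rfl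
    rw [h1, ← g.map_fun, funMap_app]
  have hembpred : ∀ (P : Sg.Pred) (args : ∀ i, A.dom ((Sg.predDom P).get i)),
      B.interpPred P (fun i => emb _ (args i)) ↔ A.interpPred P args := by
    intro P args
    show Language.Structure.RelMap (L := L Sg) (Rel.pred P)
      (fun i => g (some ⟨_, args i⟩)) ↔ _
    have h1 : (fun i => g (some ⟨(Sg.predDom P).get i, args i⟩)) =
        g ∘ (fun i => (some ⟨(Sg.predDom P).get i, args i⟩ : D A)) := rfl
    rw [h1, g.map_rel, relMap_pred]
  let C : MS.Substructure B :=
    { carrier := fun s => {x | ∃ a : A.dom s, x = emb s a}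
      carrier_nonempty := fun s => ⟨emb s (A.dom_nonempty s).some, (A.dom_nonempty s).some, rfl⟩
      closed := by
        intro f args hargs
        choose a ha using hargs
        have hh : args = fun i => emb _ (a i) := funext ha
        subst hh
        exact ⟨A.interpFunc f a, (hembfun f a)⟩ }
  let isoAC : Iso A C.toStructure :=
    { toEquiv := fun s => Equiv.ofBijective
        (fun a : A.dom s => (⟨emb s a, a, rfl⟩ : C.toStructure.dom s))
        ⟨fun a b h => hembinj s (congrArg Subtype.val h),
         by rintro ⟨x, a, rfl⟩; exact ⟨a, rfl⟩⟩
      map_func := fun f args => Subtype.ext (hembfun f args).symm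
      map_pred := fun P args => (hembpred P args).symm }
  have helem : C.IsElementary := by
    intro φ ν
    set ν₀ : Assign A := fun s n => (isoAC.toEquiv s).symm (ν s n) with hν₀
    have hν : isoAssign isoAC ν₀ = ν := by
      funext s n
      exact (isoAC.toEquiv s).apply_symm_apply (ν s n)
    have h1 : MS.Sat C.toStructure ν φ ↔ MS.Sat A ν₀ φ := by
      rw [← hν]; exact (sat_iso isoAC φ ν₀).symm
    have h2 := sat_iso (isoD (A := A)) φ ν₀
    have h3 := sat_iff_realize (h := goodD (A := A)) φ (isoAssign (isoD (A := A)) ν₀)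
    have h4 := g.map_formula (trFml φ) (val (h := goodD (A := A)) (isoAssign (isoD (A := A)) ν₀))
    have h5 := sat_iff_realize (h := hgood) φ (C.amb ν)
    have h6 : val (h := hgood) (C.amb ν) =
        g ∘ (val (h := goodD (A := A)) (isoAssign (isoD (A := A)) ν₀)) := by
      funext p
      show ((C.amb ν) p.1 p.2).1 = g (some ⟨p.1, ν₀ p.1 p.2⟩)
      rw [← hν]
      rfl
    rw [h1, h2, h3, h5, h6]
    exact h4.symm
  refine ⟨C, helem, ⟨isoAC⟩, fun s => rfl, ?_⟩
  intro s hsurj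
  constructor
  · apply Set.eq_univ_of_forall
    rintro ⟨x, hx⟩
    obtain ⟨a, ha⟩ := hsurj x hx
    exact ⟨a, Subtype.ext ha⟩
  · apply le_antisymm
    · exact mk_le_of_surjective (f := emb s) (fun x => by
        obtain ⟨a, ha⟩ := hsurj x.1 x.2
        exact ⟨a, (Subtype.ext ha.symm : emb s a = x)⟩)
    · exact mk_le_of_injective (hembinj s)

end Package
section Card

open Cardinal Language

variable (Sg) in
lemma card_L_le : (L Sg).card ≤ Sg.card := by
  rw [Language.card, Language.Symbols, Cardinal.mk_sum]
  simp only [Cardinal.lift_id]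
  have h1 : #(Σ n, Fn Sg n) ≤ #Sg.Func :=
    Cardinal.mk_le_of_injective (f := fun x : Σ n, Fn Sg n =>
        match x with | ⟨_, .func f⟩ => f)
      (by rintro ⟨_, ⟨f⟩⟩ ⟨_, ⟨f'⟩⟩ h; dsimp at h; subst h; rfl)
  have h2 : #(Σ n, Rel Sg n) ≤ #Sg.Pred + #Sg.Sorts := by
    have he : #Sg.Pred + #Sg.Sorts = #(Sg.Pred ⊕ Sg.Sorts) := by
      rw [Cardinal.mk_sum]; simp
    rw [he]
    refine Cardinal.mk_le_of_injective (f := fun x : Σ n, Rel Sg n =>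
        match x with | ⟨_, .pred P⟩ => Sum.inl P | ⟨_, .sort s⟩ => Sum.inr s) ?_
    rintro ⟨_, P | s⟩ ⟨_, Q | t⟩ h <;> dsimp at h
    · obtain rfl := Sum.inl.inj h; rfl
    · exact absurd h (by simp)
    · exact absurd h (by simp)
    · obtain rfl := Sum.inr.inj h; rfl
  refine le_trans (add_le_add h1 h2) (le_of_eq ?_)
  rw [MSSignature.card]
  ring

end Card

end LSAux
/-- Upward Löwenheim–Skolem for many-sorted logic with a single target cardinal:
given `κ ≥ max(|Σ|, ℵ₀, sup{|σ^𝔸| : σ^𝔸 infinite})`, there is a structure `𝔹`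
containing (an isomorphic copy of) `𝔸` as an elementary substructure with
`|σ^𝔹| = κ` for every sort whose interpretation in `𝔸` is infinite, and with
`σ^𝔹 = σ^𝔸` (the substructure is everything and cardinalities agree) on every
sort whose interpretation in `𝔸` is finite. -/
theorem many_sorted_upward_LS {Sg : MSSignature} (A : Structure Sg) (κ : Cardinal)
    (hsig : max Sg.card ℵ₀ ≤ κ)
    (hdom : ∀ s : Sg.Sorts, Infinite (A.dom s) → #(A.dom s) ≤ κ) :
    ∃ (B : Structure Sg) (C : Substructure B), C.IsElementary ∧
      Nonempty (Iso A C.toStructure) ∧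
      (∀ s : Sg.Sorts, Infinite (A.dom s) → #(B.dom s) = κ) ∧
      (∀ s : Sg.Sorts, Finite (A.dom s) → C.carrier s = Set.univ ∧ #(B.dom s) = #(A.dom s)) := by
  classical
  by_cases hinf : ∃ s : Sg.Sorts, Infinite (A.dom s)
  · -- main case: some infinite sort
    obtain ⟨s0, hs0⟩ := hinf
    have hκ0 : ℵ₀ ≤ κ := (le_max_right _ _).trans hsig
    have hκsig : Sg.card ≤ κ := (le_max_left _ _).trans hsig
    have hSorts : #Sg.Sorts ≤ κ := by
      refine le_trans ?_ hκsig
      rw [MSSignature.card]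
      exact (self_le_add_right _ _).trans (self_le_add_right _ _)
    have hdomall : ∀ s, #(A.dom s) ≤ κ := by
      intro s
      by_cases h : Infinite (A.dom s)
      · exact hdom s h
      · have : Finite (A.dom s) := not_infinite_iff_finite.mp h
        exact le_trans (le_of_lt (Cardinal.lt_aleph0_of_finite _)) hκ0
    have hD : #(LSAux.D A) ≤ κ := by
      rw [LSAux.D, Cardinal.mk_option, Cardinal.mk_sigma]
      have h1 : (Cardinal.sum fun s => #(A.dom s)) ≤ #Sg.Sorts * κ := by
        rw [← Cardinal.sum_const']
        exact Cardinal.sum_le_sum _ _ hdomall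
      have h2 : #Sg.Sorts * κ ≤ κ := by
        calc #Sg.Sorts * κ ≤ κ * κ := mul_le_mul' hSorts le_rfl
          _ = κ := Cardinal.mul_eq_self hκ0
      have h3 : (1 : Cardinal) ≤ κ := le_trans Cardinal.one_le_aleph0 hκ0
      calc (Cardinal.sum fun s => #(A.dom s)) + 1 ≤ κ + κ := add_le_add (h1.trans h2) h3
        _ = κ := Cardinal.add_eq_self hκ0
    obtain ⟨W, iW, hWne, g, c, hcinj, hcsort⟩ := LSAux.exists_big_ext A κ
    have hκW : κ ≤ #W := by
      rw [← Cardinal.mk_out κ]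
      exact Cardinal.mk_le_of_injective (f := fun i => c (⟨s0, hs0⟩, i))
        (fun i j h => congrArg Prod.snd (hcinj h))
    set S : Set W := Set.range g ∪ Set.range c with hSdef
    have hSκ : #S ≤ κ := by
      apply le_trans (Cardinal.mk_union_le _ _)
      have h1 : #(Set.range (g : LSAux.D A → W)) ≤ κ := le_trans Cardinal.mk_range_le hD
      have h2 : #(Set.range c) ≤ κ := by
        apply le_trans Cardinal.mk_range_le
        rw [LSAux.SI, Cardinal.mk_prod]
        simp only [Cardinal.lift_id]
        calc #{s : Sg.Sorts // Infinite (A.dom s)} * #κ.out ≤ κ * κ :=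
            mul_le_mul' (le_trans (Cardinal.mk_subtype_le _) hSorts)
              (le_of_eq (Cardinal.mk_out κ))
          _ = κ := Cardinal.mul_eq_self hκ0
      exact le_trans (add_le_add h1 h2) (le_of_eq (Cardinal.add_eq_self hκ0))
    obtain ⟨S', hSS', hS'κ⟩ := FirstOrder.Language.exists_elementarySubstructure_card_eq
      (LSAux.L Sg) S κ hκ0 (by simpa using hSκ)
      (by simpa using le_trans (LSAux.card_L_le Sg) hκsig) (by simpa using hκW)
    have hS'card : #(↥S') = κ := by simpa using hS'κ
    let gN : (LSAux.L Sg).ElementaryEmbedding (LSAux.D A) ↥S' :=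
      LSAux.eeCodRestrict S' g
        (fun x => hSS' (Set.mem_union_left _ (Set.mem_range_self x)))
    obtain ⟨B, C, helem, hiso, hdomeq, hfin⟩ := LSAux.package A gN
    refine ⟨B, C, helem, hiso, ?_, ?_⟩
    · intro s hsInf
      rw [hdomeq s]
      apply le_antisymm
      · exact le_trans (Cardinal.mk_subtype_le _) (le_of_eq hS'card)
      · rw [← Cardinal.mk_out κ]
        have hmem : ∀ i : κ.out, c (⟨s, hsInf⟩, i) ∈ S' :=
          fun i => hSS' (Set.mem_union_right _ (Set.mem_range_self _))
        have hsort : ∀ i : κ.out,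
            LSAux.InSort (Sg := Sg) s (⟨c (⟨s, hsInf⟩, i), hmem i⟩ : ↥S') := by
          intro i
          exact (LSAux.insort_map (S'.subtype)
            (⟨c (⟨s, hsInf⟩, i), hmem i⟩ : ↥S') (s := s)).1 (hcsort (⟨s, hsInf⟩, i))
        refine Cardinal.mk_le_of_injective
          (f := fun i => (⟨⟨c (⟨s, hsInf⟩, i), hmem i⟩, hsort i⟩ :
            {x : ↥S' // LSAux.InSort s x})) ?_
        intro i j h
        have h2 : c (⟨s, hsInf⟩, i) = c (⟨s, hsInf⟩, j) :=
          congrArg (fun x : {x : ↥S' // LSAux.InSort s x} => (x.1 : W)) h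
        exact congrArg Prod.snd (hcinj h2)
    · intro s hsFin
      haveI := Fintype.ofFinite (A.dom s)
      apply hfin s
      intro x hx
      have hDside : (LSAux.boundedFml Sg s (A.dom s)).Realize
          (M := LSAux.D A) (fun a => some ⟨s, a⟩) := by
        rw [LSAux.realize_boundedFml]
        intro y hy
        rw [LSAux.insort_iff] at hy
        exact hy
      have hNside := (gN.map_formula (LSAux.boundedFml Sg s (A.dom s))
        (fun a => (some ⟨s, a⟩ : LSAux.D A))).2 hDside
      rw [LSAux.realize_boundedFml] at hNside
      exact hNside x hx
  · -- trivial case: all sorts finite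
    let C : Substructure A :=
      { carrier := fun s => Set.univ
        carrier_nonempty := fun s => ⟨(A.dom_nonempty s).some, Set.mem_univ _⟩
        closed := fun f args _ => Set.mem_univ _ }
    let isoU : Iso A C.toStructure :=
      { toEquiv := fun s =>
          ⟨fun a => ⟨a, Set.mem_univ a⟩, fun x => x.1, fun a => rfl, fun x => rfl⟩
        map_func := fun f args => Subtype.ext rfl
        map_pred := fun P args => Iff.rfl }
    refine ⟨A, C, ?_, ⟨isoU⟩, ?_, ?_⟩
    · intro φ ν
      have hν : LSAux.isoAssign isoU (C.amb ν) = ν := by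
        funext s n
        exact Subtype.ext rfl
      have h := LSAux.sat_iso isoU φ (C.amb ν)
      rw [hν] at h
      exact h.symm
    · intro s hsInf
      exact absurd ⟨s, hsInf⟩ hinf
    · intro s _
      exact ⟨rfl, rfl⟩
end
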